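/- Let (G,σ) be a signed graph and k a positive integer. If (G,σ) has a 2k-coloring (with color set {±1,…,±k}), then (G,σ) has a (4k,2)-coloring. In particular, if χ±(G,σ) = 2k, then χ_c(G,σ) ≤ χ±(G,σ). -/
import Mathlib


open SimpleGraph

/-- `|x|_k`: the circular distance of `x` from `0` in `ℤ/kℤ`, i.e.
`min([x]_k, [-x]_k)` where `[x]_k` is the remainder of `x` modulo `k`. -/
def cdist (k : ℕ) (x : ℤ) : ℤ :=
  min (x % (k : ℤ)) ((-x) % (k : ℤ))

/-- A `(k,d)`-coloring of a signed graph `(G, σ)`: a map `c : V → ℤ_k`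
(represented by integers in `[0, k)`) with `d ≤ |c u − σ(uv)·c v|_k` for every
edge `uv`. -/
def IsKDColoring {V : Type*} (G : SimpleGraph V) (σ : Sym2 V → ℤˣ) (k d : ℕ)
    (c : V → ℤ) : Prop :=
  (∀ v, 0 ≤ c v ∧ c v < (k : ℤ)) ∧
    ∀ u v : V, G.Adj u v → (d : ℤ) ≤ cdist k (c u - (σ s(u, v) : ℤ) * c v)

/-- The (modular) chromatic number of `(G, σ)`: the least `k` (with `k ≥ 2`)
such that `(G, σ)` has a `(k,1)`-coloring. -/
noncomputable def chiMod {V : Type*} (G : SimpleGraph V) (σ : Sym2 V → ℤˣ) : ℕ :=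
  sInf {k : ℕ | 2 ≤ k ∧ ∃ c : V → ℤ, IsKDColoring G σ k 1 c}

/-- The circular chromatic number of `(G, σ)`: the infimum of `k/d` over all
pairs `(k, d)` of positive integers with `2d ≤ k` such that `(G, σ)` has a
`(k,d)`-coloring. -/
noncomputable def circChrom {V : Type*} (G : SimpleGraph V) (σ : Sym2 V → ℤˣ) : ℝ :=
  sInf {r : ℝ | ∃ k d : ℕ, 0 < d ∧ 2 * d ≤ k ∧ r = (k : ℝ) / (d : ℝ) ∧
    ∃ c : V → ℤ, IsKDColoring G σ k d c}

/-- The color set `M_n` of Máčajová–Raspaud–Škoviera: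
`M_{2k} = {±1, …, ±k}` and `M_{2k+1} = {0, ±1, …, ±k}`. -/
def Mset (n : ℕ) : Set ℤ :=
  {x : ℤ | 2 * |x| ≤ (n : ℤ) ∧ (x = 0 → Odd n)}

/-- An `n`-coloring of a signed graph `(G, σ)`. -/
def IsPMColoring {V : Type*} (G : SimpleGraph V) (σ : Sym2 V → ℤˣ) (n : ℕ)
    (c : V → ℤ) : Prop :=
  (∀ v, c v ∈ Mset n) ∧ ∀ u v : V, G.Adj u v → c u ≠ (σ s(u, v) : ℤ) * c v

/-- The signed chromatic number `χ±`. -/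
noncomputable def chiPM {V : Type*} (G : SimpleGraph V) (σ : Sym2 V → ℤˣ) : ℕ :=
  sInf {n : ℕ | ∃ c : V → ℤ, IsPMColoring G σ n c}


lemma emod_ge_two (k : ℕ) (z : ℤ) (hz : z ≠ 0) (he : Even z)
    (hb : |z| ≤ 4 * k - 2) : 2 ≤ z % ((4 * k : ℕ) : ℤ) := by
  have hk : (0:ℤ) < (4*k:ℕ) := by
    have : 1 ≤ |z| := Int.one_le_abs hz
    push_cast; omega
  have hnn : 0 ≤ z % ((4*k:ℕ):ℤ) := Int.emod_nonneg _ (by omega)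
  have hev : Even (z % ((4*k:ℕ):ℤ)) := by
    rw [Int.emod_def]
    exact he.sub (by refine (Even.mul_right ?_ _); push_cast; exact ⟨2*k, by ring⟩)
  have hne : z % ((4*k:ℕ):ℤ) ≠ 0 := by
    intro h0
    have hdvd : ((4*k:ℕ):ℤ) ∣ z := Int.dvd_of_emod_eq_zero h0
    have := Int.le_of_dvd (abs_pos.2 hz) ((dvd_abs _ _).2 hdvd)
    push_cast at this hb ⊢
    omega
  obtain ⟨r, hr⟩ := hev
  omega

lemma cdist_ge_two (k : ℕ) (y : ℤ) (hy : y ≠ 0) (he : Even y)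
    (hb : |y| ≤ 4 * k - 2) : 2 ≤ cdist (4 * k) y := by
  unfold cdist
  refine le_min (emod_ge_two k y hy he hb) (emod_ge_two k (-y) (by omega) he.neg ?_)
  rwa [abs_neg]

lemma cdist_congr (k : ℕ) {x y : ℤ} (h : x % (k:ℤ) = y % (k:ℤ)) :
    cdist k x = cdist k y := by
  have h2 : (-x) % (k:ℤ) = (-y) % (k:ℤ) := Int.ModEq.neg h
  unfold cdist; rw [h, h2]

lemma core (k : ℕ) (ε a b : ℤ) (hε : ε = 1 ∨ ε = -1)
    (ha : a ≠ 0) (hb : b ≠ 0) (ha' : |a| ≤ k) (hb' : |b| ≤ k) (hne : a ≠ ε * b) :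
    ((2*a - (if 0 < a then 1 else -1)) - ε * (2*b - (if 0 < b then 1 else -1))) ≠ 0 ∧
    Even ((2*a - (if 0 < a then 1 else -1)) - ε * (2*b - (if 0 < b then 1 else -1))) ∧
    |(2*a - (if 0 < a then 1 else -1)) - ε * (2*b - (if 0 < b then 1 else -1))| ≤ 4*k - 2 := by
  rw [abs_le] at ha' hb'
  rw [Int.even_iff]
  rcases hε with rfl | rfl <;> rw [abs_le] <;> split_ifs <;>
    refine ⟨by omega, by omega, by omega, by omega⟩

/-- If `(G, σ)` has a `2k`-coloring (with colors `{±1, …, ±k}`), then it has a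
`(4k,2)`-coloring. In particular, if `χ±(G,σ) = 2k` then
`χ_c(G,σ) ≤ χ±(G,σ)`. -/
theorem circChrom_le_chiPM_of_even {V : Type*} [Fintype V] (G : SimpleGraph V)
    (σ : Sym2 V → ℤˣ) (k : ℕ) (hk : 0 < k) :
    ((∃ c : V → ℤ, IsPMColoring G σ (2 * k) c) →
        ∃ c : V → ℤ, IsKDColoring G σ (4 * k) 2 c) ∧
      (chiPM G σ = 2 * k → circChrom G σ ≤ (chiPM G σ : ℝ)) := by
  have part1 : (∃ c : V → ℤ, IsPMColoring G σ (2 * k) c) →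
      ∃ c : V → ℤ, IsKDColoring G σ (4 * k) 2 c := by
    rintro ⟨c, hcM, hcAdj⟩
    have hcol : ∀ w, c w ≠ 0 ∧ |c w| ≤ (k:ℤ) := by
      intro w
      obtain ⟨h1, h2⟩ := hcM w
      constructor
      · intro h0
        have hodd := h2 h0
        exact (Nat.not_odd_iff_even.2 ⟨k, two_mul k⟩) hodd
      · push_cast at h1; omega
    have hkpos : (0:ℤ) < ((4*k:ℕ):ℤ) := by push_cast; omega
    refine ⟨fun w => (2 * c w - (if 0 < c w then 1 else -1)) % ((4*k:ℕ):ℤ), ?_, ?_⟩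
    · intro w
      exact ⟨Int.emod_nonneg _ (by omega), Int.emod_lt_of_pos _ hkpos⟩
    · intro u v huv
      set ε : ℤ := ((σ s(u,v) : ℤˣ) : ℤ) with hεdef
      have hε : ε = 1 ∨ ε = -1 := Int.isUnit_iff.1 (σ s(u,v)).isUnit
      set n : ℤ := ((4*k:ℕ):ℤ) with hn
      set a : ℤ := 2 * c u - (if 0 < c u then 1 else -1) with hadef
      set b : ℤ := 2 * c v - (if 0 < c v then 1 else -1) with hbdef
      have h1 : Int.ModEq n (a % n) a := Int.emod_emod_of_dvd _ dvd_rfl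
      have h2 : Int.ModEq n (b % n) b := Int.emod_emod_of_dvd _ dvd_rfl
      have hmod : (a % n - ε * (b % n)) % n = (a - ε * b) % n :=
        h1.sub (h2.mul_left ε)
      obtain ⟨hy0, hyev, hyb⟩ := core k ε (c u) (c v) hε (hcol u).1 (hcol v).1
        (hcol u).2 (hcol v).2 (hcAdj u v huv)
      have := cdist_ge_two k (a - ε * b) hy0 hyev hyb
      calc ((2:ℕ):ℤ) = 2 := by norm_num
        _ ≤ cdist (4*k) (a - ε * b) := this
        _ = cdist (4*k) (a % n - ε * (b % n)) := (cdist_congr (4*k) hmod).symm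
  refine ⟨part1, ?_⟩
  intro h2k
  have hne : {n : ℕ | ∃ c : V → ℤ, IsPMColoring G σ n c}.Nonempty := by
    by_contra h
    rw [Set.not_nonempty_iff_eq_empty] at h
    have : chiPM G σ = 0 := by rw [chiPM, h, Nat.sInf_empty]
    omega
  have hmem : ∃ c : V → ℤ, IsPMColoring G σ (2*k) c := by
    have h := Nat.sInf_mem hne
    rwa [show sInf {n : ℕ | ∃ c : V → ℤ, IsPMColoring G σ n c} = chiPM G σ from rfl,
      h2k] at h
  obtain ⟨c', hc'⟩ := part1 hmem
  have hmemR : ((2*k : ℕ) : ℝ) ∈ {r : ℝ | ∃ k' d : ℕ, 0 < d ∧ 2 * d ≤ k' ∧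
      r = (k' : ℝ) / (d : ℝ) ∧ ∃ c : V → ℤ, IsKDColoring G σ k' d c} :=
    ⟨4*k, 2, by norm_num, by omega, by push_cast; ring, c', hc'⟩
  have hbdd : BddBelow {r : ℝ | ∃ k' d : ℕ, 0 < d ∧ 2 * d ≤ k' ∧
      r = (k' : ℝ) / (d : ℝ) ∧ ∃ c : V → ℤ, IsKDColoring G σ k' d c} := by
    refine ⟨0, ?_⟩
    rintro r ⟨k', d, hd, hkd, rfl, -⟩
    positivity
  have hle := csInf_le hbdd hmemR
  rw [h2k]
  exact hle
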